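/- Let D = {(v_j, N_j)}_{j=1}^M ⊆ [0,1] × ℕ be a finite nonempty data set and let ℓ(θ; D) = (1/M) Σ_{j=1}^M log f_θ(v_j, N_j) with f_θ the extended Beta-density parametrization. Then ℓ(·; D) attains its (finite or −∞-valued) supremum on (0, ∞); i.e., a maximum-likelihood estimator θ⋆(D) = argmax_θ ℓ(θ; D) exists. -/

import Mathlib

open MeasureTheory Real Set Filter Topology

noncomputable def betaFun (a b : ℝ) : ℝ := ∫ v in (0:ℝ)..1, v ^ (a - 1) * (1 - v) ^ (b - 1)

/-- Extended Beta-density parametrization `f_θ(v, N)`. -/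
noncomputable def fExt (θ : ℝ) (v : ℝ) (N : ℕ) : ℝ :=
  if v = 0 ∨ N = 0 then 1
  else if θ < (N : ℝ) then v ^ (θ - 1) * (1 - v) ^ ((N:ℝ) - θ) / betaFun θ ((N:ℝ) - θ + 1)
  else (N : ℝ) * v ^ ((N:ℝ) - 1)

/-- `log` with value `-∞` at `0` (extended-real convention). -/
noncomputable def elog (x : ℝ) : EReal := if x ≤ 0 then (⊥ : EReal) else (Real.log x : EReal)

/-- The (average) log-likelihood of the data set, with extended-real values. -/
noncomputable def logLik (M : ℕ) (v : Fin M → ℝ) (N : Fin M → ℕ) (θ : ℝ) : EReal :=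
  (((M:ℝ)⁻¹ : ℝ) : EReal) * ∑ j : Fin M, elog (fExt θ (v j) (N j))

lemma betaFun_eq_Gamma {a b : ℝ} (ha : 0 < a) (hb : 0 < b) :
    betaFun a b = Real.Gamma a * Real.Gamma b / Real.Gamma (a + b) := by
  have hcoe : ((betaFun a b : ℝ) : ℂ) = Complex.betaIntegral a b := by
    rw [betaFun, ← intervalIntegral.integral_ofReal, Complex.betaIntegral]
    refine intervalIntegral.integral_congr fun x hx => ?_
    rw [Set.uIcc_of_le (by norm_num : (0:ℝ) ≤ 1)] at hx
    push_cast
    rw [Complex.ofReal_cpow hx.1, Complex.ofReal_cpow (by linarith [hx.2])]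
    push_cast
    ring
  have hG := Complex.Gamma_mul_Gamma_eq_betaIntegral
    (s := (a:ℂ)) (t := (b:ℂ)) (by simpa using ha) (by simpa using hb)
  rw [← hcoe, ← Complex.ofReal_add, Complex.Gamma_ofReal, Complex.Gamma_ofReal,
    Complex.Gamma_ofReal, ← Complex.ofReal_mul, ← Complex.ofReal_mul] at hG
  have := Complex.ofReal_injective hG
  have hGab : Real.Gamma (a + b) ≠ 0 := (Real.Gamma_pos_of_pos (by linarith)).ne'
  field_simp
  linarith [this]


/-- Auxiliary smooth extension of `θ ↦ f_θ(v,N)`. -/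
noncomputable def Faux (v : ℝ) (n : ℕ) (θ : ℝ) : ℝ :=
  v ^ (θ - 1) * (1 - v) ^ ((n:ℝ) - θ) *
    (Real.Gamma ((n:ℝ) + 1) / (Real.Gamma θ * Real.Gamma ((n:ℝ) - θ + 1)))

lemma Faux_pos {v : ℝ} (hv0 : 0 < v) (hv1 : v < 1) {n : ℕ} {θ : ℝ}
    (hθ : 0 < θ) (hθn : θ ≤ n) : 0 < Faux v n θ := by
  have h1 : (0:ℝ) < 1 - v := by linarith
  have hn1 : (0:ℝ) < (n:ℝ) + 1 := by positivity
  have hnθ : (0:ℝ) < (n:ℝ) - θ + 1 := by linarith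
  exact mul_pos (mul_pos (rpow_pos_of_pos hv0 _) (rpow_pos_of_pos h1 _))
    (div_pos (Real.Gamma_pos_of_pos hn1)
      (mul_pos (Real.Gamma_pos_of_pos hθ) (Real.Gamma_pos_of_pos hnθ)))

lemma fExt_eq_Faux {v : ℝ} (hv0 : v ≠ 0) {n : ℕ} (hn : n ≠ 0) {θ : ℝ} (hθ : 0 < θ) :
    fExt θ v n = Faux v n (min θ n) := by
  have hnpos : (0:ℝ) < n := by exact_mod_cast Nat.pos_of_ne_zero hn
  rw [fExt, if_neg (by push_neg; exact ⟨hv0, hn⟩)]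
  rcases lt_or_ge θ (n:ℝ) with h | h
  · rw [if_pos h, min_eq_left h.le, Faux,
      betaFun_eq_Gamma hθ (by linarith)]
    have e1 : θ + ((n:ℝ) - θ + 1) = (n:ℝ) + 1 := by ring
    rw [e1]
    have h2 : Real.Gamma ((n:ℝ) + 1) ≠ 0 := (Real.Gamma_pos_of_pos (by linarith)).ne'
    have h3 : Real.Gamma θ ≠ 0 := (Real.Gamma_pos_of_pos hθ).ne'
    have h4 : Real.Gamma ((n:ℝ) - θ + 1) ≠ 0 := (Real.Gamma_pos_of_pos (by linarith)).ne'
    field_simp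
  · rw [if_neg (not_lt.mpr h), min_eq_right h, Faux]
    have e1 : (n:ℝ) - (n:ℝ) = 0 := by ring
    rw [e1, Real.rpow_zero, zero_add, Real.Gamma_one]
    have hnn : (n:ℝ) ≠ 0 := hnpos.ne'
    rw [Real.Gamma_add_one hnn]
    have h3 : Real.Gamma (n:ℝ) ≠ 0 := (Real.Gamma_pos_of_pos hnpos).ne'
    field_simp

lemma Gamma_continuousAt {θ : ℝ} (hθ : 0 < θ) : ContinuousAt Real.Gamma θ :=
  (Real.differentiableAt_Gamma (fun m => by
    have : (0:ℝ) ≤ m := Nat.cast_nonneg m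
    intro h; rw [h] at hθ; linarith)).continuousAt

lemma Faux_continuousAt {v : ℝ} (hv0 : 0 < v) (hv1 : v < 1) {n : ℕ} {θ : ℝ}
    (hθ : 0 < θ) (hθn : θ ≤ (n:ℝ) + 1/2) : ContinuousAt (Faux v n) θ := by
  have h1 : (0:ℝ) < 1 - v := by linarith
  have c1 : ContinuousAt (fun t : ℝ => v ^ (t - 1)) θ :=
    (continuousAt_const_rpow hv0.ne').comp (continuousAt_id.sub continuousAt_const)
  have c2 : ContinuousAt (fun t : ℝ => (1 - v) ^ ((n:ℝ) - t)) θ :=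
    (continuousAt_const_rpow h1.ne').comp (continuousAt_const.sub continuousAt_id)
  have c3 : ContinuousAt (fun t : ℝ => Real.Gamma t) θ := Gamma_continuousAt hθ
  have c4 : ContinuousAt (fun t : ℝ => Real.Gamma ((n:ℝ) - t + 1)) θ :=
    (Gamma_continuousAt (by linarith)).comp
      ((continuousAt_const.sub continuousAt_id).add continuousAt_const)
  have hne : Real.Gamma θ * Real.Gamma ((n:ℝ) - θ + 1) ≠ 0 :=
    (mul_pos (Real.Gamma_pos_of_pos hθ) (Real.Gamma_pos_of_pos (by linarith))).ne'
  exact (c1.mul c2).mul (continuousAt_const.div (c3.mul c4) hne)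

lemma fExt_continuousAt {v : ℝ} (hv0 : 0 < v) (hv1 : v < 1) {n : ℕ} (hn : n ≠ 0)
    {θ : ℝ} (hθ : 0 < θ) : ContinuousAt (fun t => fExt t v n) θ := by
  have hnpos : (0:ℝ) < n := by exact_mod_cast Nat.pos_of_ne_zero hn
  have heq : (fun t => fExt t v n) =ᶠ[𝓝 θ] (fun t => Faux v n (min t (n:ℝ))) := by
    filter_upwards [Ioi_mem_nhds hθ] with t ht
    exact fExt_eq_Faux hv0.ne' hn ht
  refine ContinuousAt.congr ?_ heq.symm
  have hmin : ContinuousAt (fun t : ℝ => min t (n:ℝ)) θ :=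
    continuousAt_id.min continuousAt_const
  refine (Faux_continuousAt hv0 hv1 ?_ ?_).comp hmin
  · exact lt_min hθ hnpos
  · exact le_trans (min_le_right _ _) (by linarith)

lemma fExt_pos_of_mem {v : ℝ} (hv0 : 0 < v) (hv1 : v < 1) {n : ℕ} (hn : n ≠ 0)
    {θ : ℝ} (hθ : 0 < θ) : 0 < fExt θ v n := by
  have hnpos : (0:ℝ) < n := by exact_mod_cast Nat.pos_of_ne_zero hn
  rw [fExt_eq_Faux hv0.ne' hn hθ]
  exact Faux_pos hv0 hv1 (lt_min hθ hnpos) (min_le_right _ _)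

lemma fExt_tendsto_zero {v : ℝ} (hv0 : 0 < v) (hv1 : v < 1) {n : ℕ} (hn : n ≠ 0) :
    Tendsto (fun θ => fExt θ v n) (𝓝[>] (0:ℝ)) (𝓝[>] 0) := by
  have hnpos : (0:ℝ) < n := by exact_mod_cast Nat.pos_of_ne_zero hn
  have hn1 : (1:ℝ) ≤ n := by exact_mod_cast Nat.one_le_iff_ne_zero.mpr hn
  have h1 : (0:ℝ) < 1 - v := by linarith
  rw [tendsto_nhdsWithin_iff]
  constructor
  · -- tendsto to 0
    have heq : (fun θ => fExt θ v n) =ᶠ[𝓝[>] (0:ℝ)] (fun θ =>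
        v ^ (θ - 1) * (1 - v) ^ ((n:ℝ) - θ) *
        (Real.Gamma ((n:ℝ) + 1) * ((θ * (Real.Gamma (θ+1))⁻¹) * (Real.Gamma ((n:ℝ) - θ + 1))⁻¹))) := by
      filter_upwards [Ioo_mem_nhdsGT_of_mem (by constructor <;> norm_num : (0:ℝ) ∈ Ico 0 1)]
        with θ hθ
      obtain ⟨hθ0, hθ1⟩ := hθ
      rw [fExt_eq_Faux hv0.ne' hn hθ0, min_eq_left (by linarith), Faux]
      have hg : Real.Gamma (θ + 1) = θ * Real.Gamma θ := Real.Gamma_add_one hθ0.ne'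
      have h3 : Real.Gamma θ ≠ 0 := (Real.Gamma_pos_of_pos hθ0).ne'
      rw [hg]
      have h4 : Real.Gamma ((n:ℝ) - θ + 1) ≠ 0 := (Real.Gamma_pos_of_pos (by linarith)).ne'
      field_simp
    rw [Filter.tendsto_congr' heq]
    have t1 : Tendsto (fun θ : ℝ => v ^ (θ - 1)) (𝓝[>] (0:ℝ)) (𝓝 (v ^ ((0:ℝ) - 1))) :=
      (((continuousAt_const_rpow hv0.ne').comp
        (continuousAt_id.sub continuousAt_const)).tendsto).mono_left nhdsWithin_le_nhds
    have t2 : Tendsto (fun θ : ℝ => (1 - v) ^ ((n:ℝ) - θ)) (𝓝[>] (0:ℝ))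
        (𝓝 ((1 - v) ^ ((n:ℝ) - 0))) :=
      (((continuousAt_const_rpow h1.ne').comp
        (continuousAt_const.sub continuousAt_id)).tendsto).mono_left nhdsWithin_le_nhds
    have t3 : Tendsto (fun θ : ℝ => θ * (Real.Gamma (θ+1))⁻¹) (𝓝[>] (0:ℝ))
        (𝓝 (0 * (Real.Gamma (0+1))⁻¹)) := by
      refine Tendsto.mul (tendsto_id.mono_left nhdsWithin_le_nhds) ?_
      have : ContinuousAt (fun θ : ℝ => (Real.Gamma (θ+1))⁻¹) 0 := by
        refine ContinuousAt.inv₀ ((Gamma_continuousAt (by norm_num)).comp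
          (continuousAt_id.add continuousAt_const)) ?_
        rw [zero_add, Real.Gamma_one]; norm_num
      exact this.tendsto.mono_left nhdsWithin_le_nhds
    have t4 : Tendsto (fun θ : ℝ => (Real.Gamma ((n:ℝ) - θ + 1))⁻¹) (𝓝[>] (0:ℝ))
        (𝓝 ((Real.Gamma ((n:ℝ) - 0 + 1))⁻¹)) := by
      have : ContinuousAt (fun θ : ℝ => (Real.Gamma ((n:ℝ) - θ + 1))⁻¹) 0 := by
        refine ContinuousAt.inv₀ ((Gamma_continuousAt (by linarith)).comp
          ((continuousAt_const.sub continuousAt_id).add continuousAt_const)) ?_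
        exact (Real.Gamma_pos_of_pos (by linarith)).ne'
      exact this.tendsto.mono_left nhdsWithin_le_nhds
    have tc : Tendsto (fun _ : ℝ => Real.Gamma ((n:ℝ) + 1)) (𝓝[>] (0:ℝ))
        (𝓝 (Real.Gamma ((n:ℝ) + 1))) := tendsto_const_nhds
    have := (t1.mul t2).mul (tc.mul (t3.mul t4))
    simpa using this
  · -- eventually positive
    filter_upwards [self_mem_nhdsWithin] with θ hθ
    exact fExt_pos_of_mem hv0 hv1 hn hθ



lemma elog_of_pos {x : ℝ} (hx : 0 < x) : elog x = (Real.log x : EReal) :=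
  if_neg (not_le.mpr hx)

lemma elog_zero : elog 0 = ⊥ := if_pos le_rfl

lemma ereal_coe_sum {α : Type*} (s : Finset α) (f : α → ℝ) :
    ((∑ j ∈ s, f j : ℝ) : EReal) = ∑ j ∈ s, ((f j : ℝ) : EReal) :=
  map_sum (⟨⟨Real.toEReal, EReal.coe_zero⟩, fun x y => EReal.coe_add x y⟩ : ℝ →+ EReal) f s

lemma fExt_of_ge {v : ℝ} {n : ℕ} {θ₁ θ₂ : ℝ} (h1 : (n:ℝ) ≤ θ₁) (h2 : (n:ℝ) ≤ θ₂) :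
    fExt θ₁ v n = fExt θ₂ v n := by
  by_cases h0 : v = 0 ∨ n = 0
  · rw [fExt, if_pos h0, fExt, if_pos h0]
  · rw [fExt, if_neg h0, fExt, if_neg h0, if_neg (not_lt.mpr h1), if_neg (not_lt.mpr h2)]

lemma fExt_one_eq_zero {n : ℕ} (hn : n ≠ 0) {θ : ℝ} (hθn : θ < n) : fExt θ 1 n = 0 := by
  rw [fExt, if_neg (by push_neg; exact ⟨one_ne_zero, hn⟩), if_pos hθn]
  rw [Real.one_rpow, sub_self, Real.zero_rpow (by intro h; rw [sub_eq_zero] at h; exact absurd h.symm (ne_of_lt hθn))]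
  simp

lemma fExt_pos' {θ v_ : ℝ} {n : ℕ} (hv : v_ ∈ Set.Icc (0:ℝ) 1) (hθ : 0 < θ)
    (h1 : v_ = 1 → n ≠ 0 → (n:ℝ) ≤ θ) : 0 < fExt θ v_ n := by
  by_cases h0 : v_ = 0 ∨ n = 0
  · rw [fExt, if_pos h0]; norm_num
  · push_neg at h0
    have hv0 : 0 < v_ := lt_of_le_of_ne hv.1 (Ne.symm h0.1)
    by_cases hv1 : v_ = 1
    · have hn := h1 hv1 h0.2
      rw [fExt, if_neg (by push_neg; exact h0), if_neg (not_lt.mpr hn), hv1, Real.one_rpow]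
      have hnp : (0:ℝ) < n := by exact_mod_cast Nat.pos_of_ne_zero h0.2
      simpa using hnp
    · exact fExt_pos_of_mem hv0 (lt_of_le_of_ne hv.2 hv1) h0.2 hθ

/-- Existence of a maximum-likelihood estimator `θ⋆(D)`. -/
theorem logLik_exists_max (M : ℕ) (hM : 1 ≤ M) (v : Fin M → ℝ) (N : Fin M → ℕ)
    (hv : ∀ j, v j ∈ Set.Icc (0:ℝ) 1) :
    ∃ θ ∈ Set.Ioi (0:ℝ), ∀ θ' ∈ Set.Ioi (0:ℝ), logLik M v N θ' ≤ logLik M v N θ := by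
  have hMpos : (0:ℝ) < (M:ℝ)⁻¹ := by
    have : (0:ℝ) < M := by exact_mod_cast hM
    positivity
  by_cases hA : ∀ j, v j = 0 ∨ N j = 0
  · refine ⟨1, by norm_num, fun θ' _ => le_of_eq ?_⟩
    unfold logLik
    congr 1
    refine Finset.sum_congr rfl fun j _ => ?_
    rw [fExt, if_pos (hA j), fExt, if_pos (hA j)]
  · push_neg at hA
    obtain ⟨j0, hj0v, hj0N⟩ := hA
    set K : ℕ := Finset.univ.sup N with hKdef
    have hKj : ∀ j, N j ≤ K := fun j => Finset.le_sup (Finset.mem_univ j)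
    have hK1 : 1 ≤ K := le_trans (Nat.one_le_iff_ne_zero.mpr hj0N) (hKj j0)
    have hKpos : (0:ℝ) < (K:ℝ) := by exact_mod_cast hK1
    set L : ℝ → ℝ := fun θ => (M:ℝ)⁻¹ * ∑ j, Real.log (fExt θ (v j) (N j)) with hLdef
    have hcoe : ∀ θ : ℝ, (∀ j, 0 < fExt θ (v j) (N j)) →
        logLik M v N θ = ((L θ : ℝ) : EReal) := by
      intro θ hpos
      rw [logLik, hLdef]
      rw [EReal.coe_mul, ereal_coe_sum]
      congr 1
      exact Finset.sum_congr rfl fun j _ => elog_of_pos (hpos j)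
    have hLconst : ∀ θ : ℝ, (K:ℝ) ≤ θ → L θ = L (K:ℝ) := by
      intro θ hθ
      simp only [hLdef]
      refine congrArg _ (Finset.sum_congr rfl fun j _ => congrArg Real.log ?_)
      exact fExt_of_ge (le_trans (Nat.cast_le.mpr (hKj j)) hθ) (Nat.cast_le.mpr (hKj j))
    by_cases hS : ∃ j, v j = 1 ∧ N j ≠ 0
    · -- some data point has v = 1 : log-likelihood is ⊥ below t0
      obtain ⟨js, hjs⟩ := hS
      have hsne : (Finset.univ.filter (fun j => v j = 1 ∧ N j ≠ 0)).Nonempty :=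
        ⟨js, Finset.mem_filter.mpr ⟨Finset.mem_univ _, hjs⟩⟩
      obtain ⟨j1, hj1s, hj1⟩ := Finset.exists_mem_eq_sup _ hsne N
      set t0 : ℕ := (Finset.univ.filter (fun j => v j = 1 ∧ N j ≠ 0)).sup N with ht0def
      have hj1mem := (Finset.mem_filter.mp hj1s).2
      have ht0 : ∀ j, v j = 1 → N j ≠ 0 → N j ≤ t0 := fun j h1 h2 =>
        Finset.le_sup (Finset.mem_filter.mpr ⟨Finset.mem_univ _, h1, h2⟩)
      have ht0pos : 1 ≤ t0 := by
        rw [hj1]; exact Nat.one_le_iff_ne_zero.mpr hj1mem.2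
      have ht0posR : (0:ℝ) < (t0:ℝ) := by exact_mod_cast ht0pos
      have ht0K : t0 ≤ K := le_trans (le_of_eq hj1) (hKj j1)
      have ht0KR : (t0:ℝ) ≤ (K:ℝ) := by exact_mod_cast ht0K
      have hpos : ∀ θ : ℝ, (t0:ℝ) ≤ θ → ∀ j, 0 < fExt θ (v j) (N j) := by
        intro θ hθ j
        refine fExt_pos' (hv j) (lt_of_lt_of_le ht0posR hθ) fun h1 h2 => ?_
        exact le_trans (by exact_mod_cast ht0 j h1 h2) hθ
      have hcont : ContinuousOn L (Icc (t0:ℝ) (K:ℝ)) := by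
        simp only [hLdef]
        refine continuousOn_const.mul (continuousOn_finset_sum _ fun j _ => ?_)
        by_cases h0 : v j = 0 ∨ N j = 0
        · have he : ∀ t : ℝ, fExt t (v j) (N j) = 1 := fun t => if_pos h0
          simp only [he]
          exact continuousOn_const
        · push_neg at h0
          by_cases h1 : v j = 1
          · refine ContinuousOn.congr (continuousOn_const
              (c := Real.log (fExt (K:ℝ) (v j) (N j)))) fun θ hθ => ?_
            have hNj : (N j : ℝ) ≤ θ :=
              le_trans (Nat.cast_le.mpr (ht0 j h1 h0.2)) hθ.1
            rw [fExt_of_ge hNj (Nat.cast_le.mpr (hKj j))]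
          · intro θ hθ
            have hθ0 : 0 < θ := lt_of_lt_of_le ht0posR hθ.1
            have hv0 : 0 < v j := lt_of_le_of_ne (hv j).1 (Ne.symm h0.1)
            have hv1 : v j < 1 := lt_of_le_of_ne (hv j).2 h1
            exact (ContinuousAt.log (fExt_continuousAt hv0 hv1 h0.2 hθ0)
              (fExt_pos_of_mem hv0 hv1 h0.2 hθ0).ne').continuousWithinAt
      obtain ⟨θs, hθsmem, hθsmax⟩ :=
        isCompact_Icc.exists_isMaxOn (nonempty_Icc.mpr ht0KR) hcont
      have hθsmax' := isMaxOn_iff.mp hθsmax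
      refine ⟨θs, lt_of_lt_of_le ht0posR hθsmem.1, fun θ' hθ' => ?_⟩
      rcases lt_or_ge θ' (t0:ℝ) with hlt | hge
      · have hbot : elog (fExt θ' (v j1) (N j1)) = ⊥ := by
          rw [hj1mem.1, fExt_one_eq_zero hj1mem.2
            (lt_of_lt_of_le hlt (le_of_eq (by exact_mod_cast hj1)))]
          exact elog_zero
        have hsum : ∑ j, elog (fExt θ' (v j) (N j)) = ⊥ := by
          rw [← Finset.add_sum_erase _ _ (Finset.mem_univ j1), hbot, EReal.bot_add]
        rw [logLik, hsum, EReal.coe_mul_bot_of_pos hMpos]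
        exact bot_le
      · rw [hcoe θ' (hpos θ' hge), hcoe θs (hpos θs hθsmem.1), EReal.coe_le_coe_iff]
        rcases le_or_gt θ' (K:ℝ) with hle | hgt
        · exact hθsmax' θ' ⟨hge, hle⟩
        · rw [hLconst θ' hgt.le]
          exact hθsmax' (K:ℝ) ⟨ht0KR, le_rfl⟩
    · -- no data point with v = 1 : all densities are positive
      push_neg at hS
      have hpos : ∀ θ : ℝ, 0 < θ → ∀ j, 0 < fExt θ (v j) (N j) := by
        intro θ hθ j
        exact fExt_pos' (hv j) hθ fun h1 h2 => absurd (hS j h1) h2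
      have hv0 : 0 < v j0 := lt_of_le_of_ne (hv j0).1 (Ne.symm hj0v)
      have hv1 : v j0 < 1 := lt_of_le_of_ne (hv j0).2 fun h => hj0N (hS j0 h)
      -- eventual bound near zero
      have hbound : ∀ᶠ θ in 𝓝[>] (0:ℝ),
          L θ ≤ (M:ℝ)⁻¹ * Real.log (fExt θ (v j0) (N j0)) := by
        have hterm : ∀ j, ∀ᶠ θ in 𝓝[>] (0:ℝ), Real.log (fExt θ (v j) (N j)) ≤ 0 := by
          intro j
          by_cases h0 : v j = 0 ∨ N j = 0
          · refine Filter.Eventually.of_forall fun θ => ?_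
            rw [fExt, if_pos h0, Real.log_one]
          · push_neg at h0
            have hv0' : 0 < v j := lt_of_le_of_ne (hv j).1 (Ne.symm h0.1)
            have hv1' : v j < 1 := lt_of_le_of_ne (hv j).2 fun h => h0.2 (hS j h)
            have ht := fExt_tendsto_zero hv0' hv1' h0.2
            have h1 : ∀ᶠ θ in 𝓝[>] (0:ℝ), fExt θ (v j) (N j) < 1 := by
              have : Iio (1:ℝ) ∈ 𝓝 (0:ℝ) := Iio_mem_nhds one_pos
              exact ht (mem_nhdsWithin_of_mem_nhds this)
            filter_upwards [h1, self_mem_nhdsWithin] with θ hθ1 hθ0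
            exact Real.log_nonpos (hpos θ hθ0 j).le hθ1.le
        have hall : ∀ᶠ θ in 𝓝[>] (0:ℝ), ∀ j, Real.log (fExt θ (v j) (N j)) ≤ 0 :=
          eventually_all.mpr hterm
        filter_upwards [hall] with θ hθ
        simp only [hLdef]
        refine mul_le_mul_of_nonneg_left ?_ hMpos.le
        rw [← Finset.add_sum_erase _ _ (Finset.mem_univ j0)]
        have : ∑ j ∈ Finset.univ.erase j0, Real.log (fExt θ (v j) (N j)) ≤ 0 :=
          Finset.sum_nonpos fun j _ => hθ j
        linarith
      have hlim : Filter.Tendsto (fun θ => (M:ℝ)⁻¹ * Real.log (fExt θ (v j0) (N j0)))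
          (𝓝[>] (0:ℝ)) atBot :=
        (Real.tendsto_log_nhdsGT_zero.comp
          (fExt_tendsto_zero hv0 hv1 hj0N)).const_mul_atBot hMpos
      have hev : ∀ᶠ θ in 𝓝[>] (0:ℝ), L θ < L (K:ℝ) := by
        filter_upwards [hbound, hlim.eventually (eventually_lt_atBot (L (K:ℝ)))]
          with θ h1 h2
        exact lt_of_le_of_lt h1 h2
      obtain ⟨u, hu0, hu⟩ := mem_nhdsGT_iff_exists_Ioo_subset.mp hev
      set ε : ℝ := min (u/2) (K:ℝ) with hεdef
      have hε0 : 0 < ε := lt_min (by simpa using half_pos (mem_Ioi.mp hu0)) hKpos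
      have hεK : ε ≤ (K:ℝ) := min_le_right _ _
      have hcont : ContinuousOn L (Icc ε (K:ℝ)) := by
        simp only [hLdef]
        refine continuousOn_const.mul (continuousOn_finset_sum _ fun j _ => ?_)
        by_cases h0 : v j = 0 ∨ N j = 0
        · have he : ∀ t : ℝ, fExt t (v j) (N j) = 1 := fun t => if_pos h0
          simp only [he]
          exact continuousOn_const
        · push_neg at h0
          intro θ hθ
          have hθ0 : 0 < θ := lt_of_lt_of_le hε0 hθ.1
          have hv0' : 0 < v j := lt_of_le_of_ne (hv j).1 (Ne.symm h0.1)
          have hv1' : v j < 1 := lt_of_le_of_ne (hv j).2 fun h => h0.2 (hS j h)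
          exact (ContinuousAt.log (fExt_continuousAt hv0' hv1' h0.2 hθ0)
            (fExt_pos_of_mem hv0' hv1' h0.2 hθ0).ne').continuousWithinAt
      obtain ⟨θs, hθsmem, hθsmax⟩ :=
        isCompact_Icc.exists_isMaxOn (nonempty_Icc.mpr hεK) hcont
      have hθsmax' := isMaxOn_iff.mp hθsmax
      refine ⟨θs, lt_of_lt_of_le hε0 hθsmem.1, fun θ' hθ' => ?_⟩
      rw [hcoe θ' (hpos θ' hθ'), hcoe θs (hpos θs (lt_of_lt_of_le hε0 hθsmem.1)),
        EReal.coe_le_coe_iff]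
      rcases lt_or_ge θ' ε with h1 | h2
      · have hθ'u : θ' ∈ Ioo (0:ℝ) u :=
          ⟨hθ', lt_of_lt_of_le (lt_of_lt_of_le h1 (min_le_left _ _))
            (by linarith [mem_Ioi.mp hu0])⟩
        exact le_trans (le_of_lt (hu hθ'u)) (hθsmax' (K:ℝ) ⟨hεK, le_rfl⟩)
      · rcases le_or_gt θ' (K:ℝ) with hle | hgt
        · exact hθsmax' θ' ⟨h2, hle⟩
        · rw [hLconst θ' hgt.le]
          exact hθsmax' (K:ℝ) ⟨hεK, le_rfl⟩
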